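/- For any real numbers $0 \le p < q \le 1$ there exists $N = N(p,q) \in \mathbb{N}$ such that: for every probability space $(V,\mathcal{B},\mu)$ and sets $A_1,\ldots,A_n, B_1,\ldots,B_n \in \mathcal{B}$ satisfying $\mu(A_i \cap B_j) \ge q$ for all $i < j$ and $\mu(A_j \cap B_i) \le p$ for all $i < j$, one has $n \le N$. -/

import Mathlib

open MeasureTheory Finset


open Finset

lemma exists_focal {C : ℕ} (hC : 0 < C) (f : ℕ → ℕ → Fin C) :
    ∀ (L : ℕ) (P : Finset ℕ), (C+1)^L ≤ P.card →
    ∃ T : Finset ℕ, T ⊆ P ∧ T.card = L ∧ ∃ col : ℕ → Fin C,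
      ∀ x ∈ T, ∀ y ∈ T, x < y → f x y = col x := by
  intro L
  induction L with
  | zero =>
    intro P _
    exact ⟨∅, by simp, by simp, fun _ => ⟨0, hC⟩, by simp⟩
  | succ L ih =>
    intro P hP
    have hpos : 0 < P.card := lt_of_lt_of_le (pow_pos (Nat.succ_pos C) _) hP
    have hne : P.Nonempty := Finset.card_pos.mp hpos
    set x := P.min' hne with hxdef
    have hxP : x ∈ P := P.min'_mem hne
    set P' := P.erase x with hP'def
    have hcardP' : P.card - 1 ≤ P'.card := by
      rw [hP'def, Finset.card_erase_of_mem hxP]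
    have hsum : P'.card = ∑ c : Fin C, (P'.filter (fun y => f x y = c)).card :=
      Finset.card_eq_sum_card_fiberwise (fun y _ => Finset.mem_univ _)
    have hex : ∃ c : Fin C, (C+1)^L ≤ (P'.filter (fun y => f x y = c)).card := by
      by_contra hno
      push_neg at hno
      have hlt : P'.card < C * (C+1)^L := by
        rw [hsum]
        have hnonempty : (Finset.univ : Finset (Fin C)).Nonempty := ⟨⟨0, hC⟩, Finset.mem_univ _⟩
        calc ∑ c : Fin C, (P'.filter (fun y => f x y = c)).card
            < ∑ _c : Fin C, (C+1)^L := Finset.sum_lt_sum_of_nonempty hnonempty (fun c _ => hno c)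
          _ = C * (C+1)^L := by rw [Finset.sum_const, Finset.card_univ, Fintype.card_fin, smul_eq_mul]
      have hXpos : 0 < (C+1)^L := pow_pos (Nat.succ_pos C) _
      have hPP : (C+1)^(L+1) = C * (C+1)^L + (C+1)^L := by ring
      omega
    obtain ⟨c, hc⟩ := hex
    obtain ⟨T', hT'sub, hT'card, col', hcol'⟩ := ih _ hc
    have hT'P' : T' ⊆ P' := hT'sub.trans (Finset.filter_subset _ _)
    have hxT' : x ∉ T' := fun h => (Finset.mem_erase.mp (hT'P' h)).1 rfl
    refine ⟨insert x T', ?_, ?_, (fun z => if z = x then c else col' z), ?_⟩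
    · intro y hy
      rcases Finset.mem_insert.mp hy with rfl | hy
      · exact hxP
      · exact Finset.erase_subset _ _ (hT'P' hy)
    · rw [Finset.card_insert_of_notMem hxT', hT'card]
    · intro u hu v hv huv
      rcases Finset.mem_insert.mp hu with rfl | hu
      · rcases Finset.mem_insert.mp hv with rfl | hv
        · exact absurd huv (lt_irrefl _)
        · have hvQ := hT'sub hv
          rw [Finset.mem_filter] at hvQ
          simp only [if_pos rfl]
          exact hvQ.2
      · rcases Finset.mem_insert.mp hv with rfl | hv
        · have : x ≤ u := P.min'_le u (Finset.erase_subset _ _ (hT'P' hu))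
          omega
        · have hux : u ≠ x := fun h => hxT' (h ▸ hu)
          simp only [if_neg hux]
          exact hcol' u hu v hv huv

lemma ramsey_pairs {C : ℕ} (hC : 0 < C) (m : ℕ) (f : ℕ → ℕ → Fin C) (P : Finset ℕ)
    (hP : (C+1)^(C*m) ≤ P.card) :
    ∃ (S : Finset ℕ) (c : Fin C), S ⊆ P ∧ m ≤ S.card ∧
      ∀ x ∈ S, ∀ y ∈ S, x < y → f x y = c := by
  obtain ⟨T, hTP, hTcard, col, hcol⟩ := exists_focal hC f (C*m) P hP
  have hsum : T.card = ∑ c : Fin C, (T.filter (fun y => col y = c)).card :=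
    Finset.card_eq_sum_card_fiberwise (fun y _ => Finset.mem_univ _)
  have hex : ∃ c : Fin C, m ≤ (T.filter (fun y => col y = c)).card := by
    by_contra hno
    push_neg at hno
    have : T.card < C * m := by
      rw [hsum]
      have hnonempty : (Finset.univ : Finset (Fin C)).Nonempty := ⟨⟨0, hC⟩, Finset.mem_univ _⟩
      calc ∑ c : Fin C, (T.filter (fun y => col y = c)).card
          < ∑ _c : Fin C, m := Finset.sum_lt_sum_of_nonempty hnonempty (fun c _ => hno c)
        _ = C * m := by rw [Finset.sum_const, Finset.card_univ, Fintype.card_fin, smul_eq_mul]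
    omega
  obtain ⟨c, hc⟩ := hex
  refine ⟨T.filter (fun y => col y = c), c, (Finset.filter_subset _ _).trans hTP, hc, ?_⟩
  intro u hu v hv huv
  rw [Finset.mem_filter] at hu hv
  rw [hcol u hu.1 v hv.1 huv, hu.2]

open MeasureTheory Finset

noncomputable def indR {V : Type} (s : Set V) : V → ℝ := s.indicator 1

lemma indR_mul {V : Type} (s t : Set V) (x : V) :
    indR s x * indR t x = indR (s ∩ t) x := by
  classical
  calc indR s x * indR t x = (s ∩ t).indicator (fun _ => (1:ℝ) * 1) x :=
        (Set.inter_indicator_mul _ _ _).symm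
    _ = indR (s ∩ t) x := by simp only [indR, one_mul]; rfl

lemma integrable_indR {V : Type} [MeasurableSpace V] (μ : Measure V) [IsFiniteMeasure μ]
    {s : Set V} (hs : MeasurableSet s) : Integrable (indR s) μ :=
  (integrable_const (1:ℝ)).indicator hs

lemma integral_indR {V : Type} [MeasurableSpace V] (μ : Measure V) [IsFiniteMeasure μ]
    {s : Set V} (hs : MeasurableSet s) : ∫ x, indR s x ∂μ = (μ s).toReal := by
  have h : indR (V := V) s = fun x => s.indicator (fun _ => (1:ℝ)) x := rfl
  rw [h, integral_indicator_const (1:ℝ) hs, smul_eq_mul, mul_one]; rfl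

set_option maxHeartbeats 1000000 in
/-- Hrushovski–Tao stability of probability algebras: for `0 ≤ p < q ≤ 1` there is a bound
`N` on the length of any "half-graph" configuration of sets with gap `(p, q)`. -/
theorem stmt_13 (p q : ℝ) (hp : 0 ≤ p) (hpq : p < q) (hq : q ≤ 1) :
    ∃ N : ℕ,
      ∀ (V : Type) (mV : MeasurableSpace V) (μ : Measure V), IsProbabilityMeasure μ →
      ∀ (n : ℕ) (A B : Fin n → Set V),
        (∀ i, MeasurableSet (A i)) → (∀ i, MeasurableSet (B i)) →
        (∀ i j : Fin n, i < j → ENNReal.ofReal q ≤ μ (A i ∩ B j)) →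
        (∀ i j : Fin n, i < j → μ (A j ∩ B i) ≤ ENNReal.ofReal p) →
        n ≤ N := by
  classical
  set ε : ℝ := q - p with hεdef
  have hε : 0 < ε := sub_pos.mpr hpq
  have hε2 : (0:ℝ) < ε^2 := by positivity
  set C : ℕ := ⌈(8:ℝ)/ε^2⌉₊ with hCdef
  set M : ℕ := C + 1 with hMdef
  set η : ℝ := ε^2/8 with hηdef
  have hηpos : 0 < η := by positivity
  have hC : 0 < C := by
    rw [hCdef]
    exact Nat.ceil_pos.mpr (by positivity)
  have hCR : (8:ℝ)/ε^2 ≤ (C:ℝ) := by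
    rw [hCdef]; exact Nat.le_ceil _
  have hCη : 1 ≤ (C:ℝ) * η := by
    have h3 : (8/ε^2) * η ≤ (C:ℝ) * η := mul_le_mul_of_nonneg_right hCR hηpos.le
    calc (1:ℝ) = (8/ε^2) * (ε^2/8) := by field_simp
      _ = (8/ε^2) * η := by rw [hηdef]
      _ ≤ (C:ℝ) * η := h3
  clear_value ε C M η
  -- closeness of same-colored values
  have color_close : ∀ β₁ β₂ : ℝ, 0 ≤ β₁ → β₁ ≤ 1 → 0 ≤ β₂ → β₂ ≤ 1 →
      min (C-1) ⌊β₁/η⌋₊ = min (C-1) ⌊β₂/η⌋₊ → |β₁ - β₂| ≤ η := by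
    intro β₁ β₂ h10 h11 h20 h21 hmin
    have key : ∀ β : ℝ, 0 ≤ β → (⌊β/η⌋₊ : ℝ) * η ≤ β ∧ β < ((⌊β/η⌋₊ : ℝ) + 1) * η := by
      intro β hβ
      have hfl : (⌊β/η⌋₊ : ℝ) ≤ β/η := Nat.floor_le (by positivity)
      have hfu : β/η < (⌊β/η⌋₊ : ℝ) + 1 := Nat.lt_floor_add_one _
      constructor
      · calc (⌊β/η⌋₊ : ℝ) * η ≤ (β/η) * η := mul_le_mul_of_nonneg_right hfl hηpos.le
          _ = β := by field_simp
      · calc β = (β/η) * η := by field_simp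
          _ < ((⌊β/η⌋₊ : ℝ) + 1) * η := mul_lt_mul_of_pos_right hfu hηpos
    by_cases h1 : ⌊β₁/η⌋₊ < C-1
    · by_cases h2 : ⌊β₂/η⌋₊ < C-1
      · have heq : ⌊β₁/η⌋₊ = ⌊β₂/η⌋₊ := by
          rw [min_eq_right h1.le, min_eq_right h2.le] at hmin
          exact hmin
        obtain ⟨l1, u1⟩ := key β₁ h10
        obtain ⟨l2, u2⟩ := key β₂ h20
        rw [heq] at l1 u1
        rw [abs_le]
        constructor <;> nlinarith
      · exfalso
        rw [min_eq_right h1.le, min_eq_left (le_of_not_gt h2)] at hmin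
        omega
    · by_cases h2 : ⌊β₂/η⌋₊ < C-1
      · exfalso
        rw [min_eq_left (le_of_not_gt h1), min_eq_right h2.le] at hmin
        omega
      · have hcast : ((C-1 : ℕ) : ℝ) = (C:ℝ) - 1 := by
          push_cast [Nat.cast_sub hC]
          ring
        have hb : ∀ β : ℝ, 0 ≤ β → ¬(⌊β/η⌋₊ < C-1) → 1 - η ≤ β := by
          intro β hβ hnb
          have h3 : ((C-1:ℕ) : ℝ) ≤ (⌊β/η⌋₊ : ℝ) := Nat.cast_le.mpr (le_of_not_gt hnb)
          have h4 : (⌊β/η⌋₊ : ℝ) ≤ β/η := Nat.floor_le (by positivity)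
          have h5 : ((C:ℝ) - 1) * η ≤ β := by
            rw [← hcast]
            calc ((C-1:ℕ) : ℝ) * η ≤ (β/η) * η :=
                  mul_le_mul_of_nonneg_right (h3.trans h4) hηpos.le
              _ = β := by field_simp
          nlinarith
        have hb1 := hb β₁ h10 h1
        have hb2 := hb β₂ h20 h2
        rw [abs_le]
        constructor <;> linarith
  refine ⟨(C+1)^(C*(2*M+1)), ?_⟩
  intro V mV μ hμ n A B hmA hmB hAB hBA
  haveI := hμ
  by_contra hn
  push_neg at hn
  -- coloring and Ramsey extraction
  set Bn : ℕ → Set V := fun k => if h : k < n then B ⟨k, h⟩ else ∅ with hBndef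
  set colf : ℕ → ℕ → Fin C := fun k l =>
    ⟨min (C-1) ⌊(μ (Bn k ∩ Bn l)).toReal / η⌋₊, by
      have hle := min_le_left (C-1) ⌊(μ (Bn k ∩ Bn l)).toReal / η⌋₊
      omega⟩ with hcolfdef
  obtain ⟨S0, c, hS0P, hS0card, hmono0⟩ := ramsey_pairs hC (2*M+1) colf (Finset.range n)
      (by rw [Finset.card_range]; exact hn.le)
  obtain ⟨S, hSsub, hScard⟩ := Finset.exists_subset_card_eq hS0card
  have hSP : S ⊆ Finset.range n := hSsub.trans hS0P
  have hmono : ∀ x ∈ S, ∀ y ∈ S, x < y → colf x y = c :=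
    fun x hx y hy h => hmono0 x (hSsub hx) y (hSsub hy) h
  set e := S.orderIsoOfFin hScard with hedef
  set idx : Fin (2*M+1) → ℕ := fun r => (e r : ℕ) with hidxdef
  have hidxS : ∀ r, idx r ∈ S := fun r => (e r).2
  have hidxn : ∀ r, idx r < n := fun r => Finset.mem_range.mp (hSP (hidxS r))
  have hidxmono : ∀ {r r' : Fin (2*M+1)}, r < r' → idx r < idx r' := by
    intro r r' h
    exact Subtype.coe_lt_coe.mpr (e.strictMono h)
  set jF : Fin (2*M+1) → Fin n := fun r => ⟨idx r, hidxn r⟩ with hjFdef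
  have hMlt : M < 2*M+1 := by omega
  set rM : Fin (2*M+1) := ⟨M, hMlt⟩ with hrMdef
  set iA : Fin n := jF rM with hiAdef
  set γ : Fin (2*M+1) → ℝ := fun r => (μ (A iA ∩ B (jF r))).toReal with hγdef
  set βm : Fin (2*M+1) → Fin (2*M+1) → ℝ := fun r r' => (μ (B (jF r) ∩ B (jF r'))).toReal
    with hβmdef
  have hmeas1 : ∀ s : Set V, (μ s).toReal ≤ 1 := fun s =>
    ENNReal.toReal_le_of_le_ofReal zero_le_one (by rw [ENNReal.ofReal_one]; exact prob_le_one)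
  -- γ bounds
  have hγub : ∀ r : Fin (2*M+1), r.val < M → γ r ≤ p := by
    intro r hr
    have hlt : jF r < iA := hidxmono (show r < rM from hr)
    exact ENNReal.toReal_le_of_le_ofReal hp (hBA (jF r) iA hlt)
  have hγlb : ∀ r : Fin (2*M+1), M < r.val → q ≤ γ r := by
    intro r hr
    have hlt : iA < jF r := hidxmono (show rM < r from hr)
    exact (ENNReal.ofReal_le_iff_le_toReal (measure_ne_top μ _)).mp (hAB iA (jF r) hlt)
  -- β color facts
  have hBnj : ∀ r : Fin (2*M+1), Bn (idx r) = B (jF r) := fun r => dif_pos (hidxn r)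
  have hcv : ∀ r r' : Fin (2*M+1), r < r' → min (C-1) ⌊βm r r' / η⌋₊ = c.val := by
    intro r r' h
    have h2 := hmono (idx r) (hidxS r) (idx r') (hidxS r') (hidxmono h)
    have h3 : (colf (idx r) (idx r')).val
        = min (C-1) ⌊(μ (Bn (idx r) ∩ Bn (idx r'))).toReal / η⌋₊ := rfl
    rw [h2] at h3
    rw [hBnj, hBnj] at h3
    exact h3.symm
  have hcv' : ∀ r r' : Fin (2*M+1), r ≠ r' → min (C-1) ⌊βm r r' / η⌋₊ = c.val := by
    intro r r' h
    rcases lt_or_gt_of_ne h with hlt | hgt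
    · exact hcv _ _ hlt
    · have hsymm : βm r r' = βm r' r := by
        simp only [hβmdef]
        rw [Set.inter_comm]
      rw [hsymm]
      exact hcv _ _ hgt
  have hβ0 : ∀ r r' : Fin (2*M+1), 0 ≤ βm r r' := fun r r' => ENNReal.toReal_nonneg
  have hβ1 : ∀ r r' : Fin (2*M+1), βm r r' ≤ 1 := fun r r' => hmeas1 _
  have hclose : ∀ r r' u u' : Fin (2*M+1), r ≠ r' → u ≠ u' →
      |βm r r' - βm u u'| ≤ η := by
    intro r r' u u' h h'
    exact color_close _ _ (hβ0 r r') (hβ1 r r') (hβ0 u u') (hβ1 u u')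
      (by rw [hcv' r r' h, hcv' u u' h'])
  -- weights
  set wp : Fin (2*M+1) → ℝ := fun r => if M < r.val then 1 else 0 with hwpdef
  set wm : Fin (2*M+1) → ℝ := fun r => if r.val < M then 1 else 0 with hwmdef
  set w : Fin (2*M+1) → ℝ := fun r => wp r - wm r with hwdef
  have hswm : ∑ r, wm r = (M:ℝ) := by
    have h1 : ∑ r : Fin (2*M+1), wm r
        = ∑ i ∈ Finset.range (2*M+1), (if i < M then (1:ℝ) else 0) := by
      simp only [hwmdef]
      exact Fin.sum_univ_eq_sum_range (fun i => if i < M then (1:ℝ) else 0) (2*M+1)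
    have h2 : ∀ i ∈ Finset.range (2*M+1), (if i < M then (1:ℝ) else 0)
        = (if i ∈ Finset.range M then (1:ℝ) else 0) := by
      intro i _
      simp [Finset.mem_range]
    rw [h1, Finset.sum_congr rfl h2, Finset.sum_ite_mem,
      Finset.inter_eq_right.mpr (Finset.range_subset_range.mpr (by omega))]
    simp
  have hswp : ∑ r, wp r = (M:ℝ) := by
    have h1 : ∑ r : Fin (2*M+1), wp r
        = ∑ i ∈ Finset.range (2*M+1), (if M < i then (1:ℝ) else 0) := by
      simp only [hwpdef]
      exact Fin.sum_univ_eq_sum_range (fun i => if M < i then (1:ℝ) else 0) (2*M+1)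
    have h2 : ∀ i ∈ Finset.range (2*M+1), (if M < i then (1:ℝ) else 0)
        = 1 - (if i ∈ Finset.range (M+1) then (1:ℝ) else 0) := by
      intro i _
      by_cases h : M < i
      · rw [if_pos h, if_neg (by simp only [Finset.mem_range]; omega)]
        ring
      · rw [if_neg h, if_pos (by simp only [Finset.mem_range]; omega)]
        ring
    rw [h1, Finset.sum_congr rfl h2, Finset.sum_sub_distrib, Finset.sum_ite_mem,
      Finset.inter_eq_right.mpr (Finset.range_subset_range.mpr (by omega))]
    simp only [Finset.sum_const, Finset.card_range, nsmul_eq_mul, mul_one]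
    push_cast
    ring
  have hsw : ∑ r, w r = 0 := by
    have : ∑ r : Fin (2*M+1), w r = ∑ r : Fin (2*M+1), (wp r - wm r) := by
      simp only [hwdef]
    rw [this, Finset.sum_sub_distrib, hswp, hswm, sub_self]
  have hsabs : ∑ r, (wp r + wm r) = 2*(M:ℝ) := by
    rw [Finset.sum_add_distrib, hswp, hswm]
    ring
  have hwp01 : ∀ r, wp r = 0 ∨ wp r = 1 := by
    intro r
    simp only [hwpdef]
    by_cases h : M < r.val <;> simp [h]
  have hwm01 : ∀ r, wm r = 0 ∨ wm r = 1 := by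
    intro r
    simp only [hwmdef]
    by_cases h : r.val < M <;> simp [h]
  have hwsum1 : ∀ r, wp r + wm r ≤ 1 := by
    intro r
    simp only [hwpdef, hwmdef]
    split_ifs with h1 h2 <;> norm_num <;> omega
  have hw0 : ∀ r, 0 ≤ wp r + wm r := by
    intro r
    rcases hwp01 r with h | h <;> rcases hwm01 r with h' | h' <;> rw [h, h'] <;> norm_num
  have habsw : ∀ r, |w r| ≤ wp r + wm r := by
    intro r
    have : w r = wp r - wm r := by simp only [hwdef]
    rw [this]
    rcases hwp01 r with h | h <;> rcases hwm01 r with h' | h' <;> rw [h, h'] <;> norm_num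
  -- indicator functions and integrals
  set F : V → ℝ := fun x => ∑ r, w r * indR (B (jF r)) x with hFdef
  have hmBj : ∀ r : Fin (2*M+1), MeasurableSet (B (jF r)) := fun r => hmB _
  have hP1 : (fun x => indR (A iA) x * indR (A iA) x) = indR (A iA) := by
    funext x
    rw [indR_mul, Set.inter_self]
  have hP2 : (fun x => indR (A iA) x * F x)
      = fun x => ∑ r, w r * indR (A iA ∩ B (jF r)) x := by
    funext x
    simp only [hFdef]
    rw [Finset.mul_sum]
    refine Finset.sum_congr rfl fun r _ => ?_
    have h := indR_mul (A iA) (B (jF r)) x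
    linear_combination (w r) * h
  have hP3 : (fun x => F x * F x)
      = fun x => ∑ r, ∑ r', (w r * w r') * indR (B (jF r) ∩ B (jF r')) x := by
    funext x
    simp only [hFdef]
    rw [Finset.sum_mul_sum]
    refine Finset.sum_congr rfl fun r _ => Finset.sum_congr rfl fun r' _ => ?_
    have h := indR_mul (B (jF r)) (B (jF r')) x
    linear_combination (w r * w r') * h
  have int1 : Integrable (fun x => indR (A iA) x * indR (A iA) x) μ := by
    rw [hP1]; exact integrable_indR μ (hmA iA)
  have int2 : Integrable (fun x => indR (A iA) x * F x) μ := by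
    rw [hP2]
    exact integrable_finset_sum _
      (fun r _ => (integrable_indR μ ((hmA iA).inter (hmBj r))).const_mul _)
  have int3 : Integrable (fun x => F x * F x) μ := by
    rw [hP3]
    exact integrable_finset_sum _ (fun r _ => integrable_finset_sum _
      (fun r' _ => (integrable_indR μ ((hmBj r).inter (hmBj r'))).const_mul _))
  have hIval : ∫ x, indR (A iA) x * F x ∂μ = ∑ r, w r * γ r := by
    rw [hP2, integral_finset_sum _
      (fun r _ => (integrable_indR μ ((hmA iA).inter (hmBj r))).const_mul _)]
    refine Finset.sum_congr rfl fun r _ => ?_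
    rw [integral_const_mul, integral_indR μ ((hmA iA).inter (hmBj r))]
  have hJval : ∫ x, F x * F x ∂μ = ∑ r, ∑ r', (w r * w r') * βm r r' := by
    rw [hP3, integral_finset_sum _ (fun r _ => integrable_finset_sum _
      (fun r' _ => (integrable_indR μ ((hmBj r).inter (hmBj r'))).const_mul _))]
    refine Finset.sum_congr rfl fun r _ => ?_
    rw [integral_finset_sum _
      (fun r' _ => (integrable_indR μ ((hmBj r).inter (hmBj r'))).const_mul _)]
    refine Finset.sum_congr rfl fun r' _ => ?_
    rw [integral_const_mul, integral_indR μ ((hmBj r).inter (hmBj r'))]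
  have ha1 : ∫ x, indR (A iA) x * indR (A iA) x ∂μ = (μ (A iA)).toReal := by
    rw [hP1]
    exact integral_indR μ (hmA iA)
  set I : ℝ := ∑ r, w r * γ r with hIdef
  set J : ℝ := ∑ r, ∑ r', (w r * w r') * βm r r' with hJdef
  clear_value I J
  -- lower bound on I
  have hIlb : (M:ℝ) * ε ≤ I := by
    have e1 : I = ∑ r, wp r * γ r - ∑ r, wm r * γ r := by
      rw [hIdef, ← Finset.sum_sub_distrib]
      refine Finset.sum_congr rfl fun r _ => ?_
      have : w r = wp r - wm r := by simp only [hwdef]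
      rw [this]
      ring
    have e2 : ∑ r : Fin (2*M+1), (if M < r.val then q else (0:ℝ)) ≤ ∑ r, wp r * γ r := by
      refine Finset.sum_le_sum fun r _ => ?_
      by_cases h : M < r.val
      · have hwr : wp r = 1 := by simp only [hwpdef]; rw [if_pos h]
        rw [if_pos h, hwr, one_mul]
        exact hγlb r h
      · have hwr : wp r = 0 := by simp only [hwpdef]; rw [if_neg h]
        rw [if_neg h, hwr, zero_mul]
    have e3 : ∑ r : Fin (2*M+1), (if M < r.val then q else (0:ℝ)) = q * (M:ℝ) := by
      have h : ∀ r : Fin (2*M+1), (if M < r.val then q else (0:ℝ)) = q * wp r := by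
        intro r
        by_cases h : M < r.val <;> simp [hwpdef, h]
      rw [Finset.sum_congr rfl (fun r _ => h r), ← Finset.mul_sum, hswp]
    have e4 : ∑ r, wm r * γ r ≤ ∑ r : Fin (2*M+1), (if r.val < M then p else (0:ℝ)) := by
      refine Finset.sum_le_sum fun r _ => ?_
      by_cases h : r.val < M
      · have hwr : wm r = 1 := by simp only [hwmdef]; rw [if_pos h]
        rw [if_pos h, hwr, one_mul]
        exact hγub r h
      · have hwr : wm r = 0 := by simp only [hwmdef]; rw [if_neg h]
        rw [if_neg h, hwr, zero_mul]
    have e5 : ∑ r : Fin (2*M+1), (if r.val < M then p else (0:ℝ)) = p * (M:ℝ) := by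
      have h : ∀ r : Fin (2*M+1), (if r.val < M then p else (0:ℝ)) = p * wm r := by
        intro r
        by_cases h : r.val < M <;> simp [hwmdef, h]
      rw [Finset.sum_congr rfl (fun r _ => h r), ← Finset.mul_sum, hswm]
    have e6 : (M:ℝ) * ε = q * (M:ℝ) - p * (M:ℝ) := by
      rw [hεdef]; ring
    rw [e3] at e2
    rw [e5] at e4
    rw [e1, e6]
    linarith
  -- upper bound on J
  have h0lt : 0 < 2*M+1 := by omega
  have h1lt : 1 < 2*M+1 := by omega
  set r0 : Fin (2*M+1) := ⟨0, h0lt⟩ with hr0def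
  set r1 : Fin (2*M+1) := ⟨1, h1lt⟩ with hr1def
  have hβ₀ne : r0 ≠ r1 := by
    intro h
    have := congrArg Fin.val h
    simp only [hr0def, hr1def] at this
    omega
  set β₀ : ℝ := βm r0 r1 with hβ₀def
  have hβ₀0 : 0 ≤ β₀ := hβ0 r0 r1
  have hβ₀1 : β₀ ≤ 1 := hβ1 r0 r1
  have hJub : J ≤ (2*(M:ℝ)+1) + η * (2*(M:ℝ))^2 := by
    have hzero : ∑ r, ∑ r', β₀ * (w r * w r') = 0 := by
      have h : ∑ r, ∑ r', β₀ * (w r * w r') = β₀ * ((∑ r, w r) * (∑ r, w r)) := by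
        rw [Finset.sum_mul_sum, Finset.mul_sum]
        refine Finset.sum_congr rfl fun r _ => ?_
        rw [Finset.mul_sum]
      rw [h, hsw]
      ring
    have hJeq : J = ∑ r, ∑ r', (w r * w r') * (βm r r' - β₀) := by
      have h : ∀ r r' : Fin (2*M+1), (w r * w r') * βm r r'
          = (w r * w r') * (βm r r' - β₀) + β₀ * (w r * w r') := by
        intro r r'
        ring
      calc J = ∑ r, ∑ r', ((w r * w r') * (βm r r' - β₀) + β₀ * (w r * w r')) := by
            rw [hJdef]
            exact Finset.sum_congr rfl fun r _ => Finset.sum_congr rfl fun r' _ => h r r'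
        _ = (∑ r, ∑ r', (w r * w r') * (βm r r' - β₀)) + ∑ r, ∑ r', β₀ * (w r * w r') := by
            rw [← Finset.sum_add_distrib]
            exact Finset.sum_congr rfl fun r _ => Finset.sum_add_distrib
        _ = ∑ r, ∑ r', (w r * w r') * (βm r r' - β₀) := by rw [hzero, add_zero]
    have hterm : ∀ r r' : Fin (2*M+1), (w r * w r') * (βm r r' - β₀)
        ≤ (if r' = r then (1:ℝ) else 0) + η * ((wp r + wm r) * (wp r' + wm r')) := by
      intro r r'
      have hnn : 0 ≤ η * ((wp r + wm r) * (wp r' + wm r')) := by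
        have := hw0 r
        have := hw0 r'
        positivity
      by_cases hrr : r' = r
      · subst hrr
        rw [if_pos rfl]
        have h1 : |w r'| ≤ 1 := (habsw r').trans (hwsum1 r')
        have h2 : |βm r' r' - β₀| ≤ 1 := by
          rw [abs_le]
          constructor
          · linarith [hβ0 r' r']
          · linarith [hβ1 r' r']
        have h3 : (w r' * w r') * (βm r' r' - β₀) ≤ 1 := by
          calc (w r' * w r') * (βm r' r' - β₀)
              ≤ |(w r' * w r') * (βm r' r' - β₀)| := le_abs_self _
            _ = |w r'| * |w r'| * |βm r' r' - β₀| := by rw [abs_mul, abs_mul]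
            _ ≤ 1 * 1 * 1 := by
                have h0 := abs_nonneg (w r')
                have h0' := abs_nonneg (βm r' r' - β₀)
                nlinarith
            _ = 1 := by norm_num
        linarith
      · rw [if_neg hrr, zero_add]
        have hne : r ≠ r' := fun h => hrr h.symm
        have h1 : |βm r r' - β₀| ≤ η := hclose r r' r0 r1 hne hβ₀ne
        calc (w r * w r') * (βm r r' - β₀)
            ≤ |(w r * w r') * (βm r r' - β₀)| := le_abs_self _
          _ = |w r| * |w r'| * |βm r r' - β₀| := by rw [abs_mul, abs_mul]
          _ ≤ (wp r + wm r) * (wp r' + wm r') * η := by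
              have ha := habsw r
              have hb := habsw r'
              have hc := hw0 r
              have hd := hw0 r'
              have hab : |w r| * |w r'| ≤ (wp r + wm r) * (wp r' + wm r') :=
                mul_le_mul ha hb (abs_nonneg _) hc
              exact mul_le_mul hab h1 (abs_nonneg _) (mul_nonneg hc hd)
          _ = η * ((wp r + wm r) * (wp r' + wm r')) := by ring
    have hsum1 : ∑ r : Fin (2*M+1), ∑ r' : Fin (2*M+1), (if r' = r then (1:ℝ) else 0)
        = 2*(M:ℝ)+1 := by
      have h : ∀ r : Fin (2*M+1), ∑ r' : Fin (2*M+1), (if r' = r then (1:ℝ) else 0) = 1 := by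
        intro r
        rw [Finset.sum_ite_eq' Finset.univ r (fun _ => (1:ℝ))]
        simp
      rw [Finset.sum_congr rfl (fun r _ => h r), Finset.sum_const, Finset.card_univ,
        Fintype.card_fin, nsmul_eq_mul, mul_one]
      push_cast
      ring
    have hsum2 : ∑ r : Fin (2*M+1), ∑ r' : Fin (2*M+1),
        η * ((wp r + wm r) * (wp r' + wm r')) = η * (2*(M:ℝ))^2 := by
      have h : ∀ r : Fin (2*M+1), ∑ r' : Fin (2*M+1), η * ((wp r + wm r) * (wp r' + wm r'))
          = (η * (wp r + wm r)) * (2*(M:ℝ)) := by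
        intro r
        calc ∑ r' : Fin (2*M+1), η * ((wp r + wm r) * (wp r' + wm r'))
            = (η * (wp r + wm r)) * ∑ r' : Fin (2*M+1), (wp r' + wm r') := by
              rw [Finset.mul_sum]
              exact Finset.sum_congr rfl fun r' _ => by ring
          _ = (η * (wp r + wm r)) * (2*(M:ℝ)) := by rw [hsabs]
      calc ∑ r : Fin (2*M+1), ∑ r' : Fin (2*M+1), η * ((wp r + wm r) * (wp r' + wm r'))
          = ∑ r : Fin (2*M+1), (η * (wp r + wm r)) * (2*(M:ℝ)) :=
            Finset.sum_congr rfl fun r _ => h r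
        _ = (η * (2*(M:ℝ))) * ∑ r : Fin (2*M+1), (wp r + wm r) := by
            rw [Finset.mul_sum]
            exact Finset.sum_congr rfl fun r _ => by ring
        _ = η * (2*(M:ℝ))^2 := by rw [hsabs]; ring
    calc J = ∑ r, ∑ r', (w r * w r') * (βm r r' - β₀) := hJeq
      _ ≤ ∑ r : Fin (2*M+1), ∑ r' : Fin (2*M+1),
            ((if r' = r then (1:ℝ) else 0) + η * ((wp r + wm r) * (wp r' + wm r'))) :=
          Finset.sum_le_sum fun r _ => Finset.sum_le_sum fun r' _ => hterm r r'
      _ = (2*(M:ℝ)+1) + η * (2*(M:ℝ))^2 := by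
          rw [Finset.sum_congr rfl (fun r (_ : r ∈ Finset.univ) => Finset.sum_add_distrib),
            Finset.sum_add_distrib, hsum1, hsum2]
  -- Cauchy–Schwarz via nonnegativity of squares
  have key : ∀ t : ℝ, 0 ≤ (μ (A iA)).toReal - 2*t*I + t^2*J := by
    intro t
    have hnn : 0 ≤ ∫ x, (indR (A iA) x - t * F x)^2 ∂μ :=
      integral_nonneg fun x => sq_nonneg _
    have hexp : ∀ x, (indR (A iA) x - t * F x)^2
        = (indR (A iA) x * indR (A iA) x) - (2*t) * (indR (A iA) x * F x)
          + t^2 * (F x * F x) := by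
      intro x
      ring
    simp only [hexp] at hnn
    have int2' : Integrable (fun x => 2*t*(indR (A iA) x * F x)) μ := int2.const_mul (2*t)
    have int3' : Integrable (fun x => t^2*(F x * F x)) μ := int3.const_mul (t^2)
    have intSub : Integrable
        (fun x => indR (A iA) x * indR (A iA) x - 2*t*(indR (A iA) x * F x)) μ :=
      int1.sub int2'
    rw [integral_add intSub int3', integral_sub int1 int2', integral_const_mul,
      integral_const_mul, hIval, hJval, ha1] at hnn
    exact hnn
  have hJ0 : 0 ≤ J := by
    have h := integral_nonneg (μ := μ) (f := fun x => F x * F x)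
      (fun x => mul_self_nonneg _)
    rw [hJval] at h
    exact h
  have hMpos : (0:ℝ) < (M:ℝ) := by
    have : 0 < M := by omega
    exact_mod_cast this
  have hM1 : (1:ℝ) ≤ (M:ℝ) := by
    have : 1 ≤ M := by omega
    exact_mod_cast this
  have hIpos : 0 < I := lt_of_lt_of_le (mul_pos hMpos hε) hIlb
  have haA1 : (μ (A iA)).toReal ≤ 1 := hmeas1 _
  have haA0 : 0 ≤ (μ (A iA)).toReal := ENNReal.toReal_nonneg
  have hI2J : I^2 ≤ J := by
    rcases eq_or_lt_of_le hJ0 with h0 | hJpos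
    · exfalso
      have hk := key (((μ (A iA)).toReal + 1)/I)
      rw [← h0] at hk
      have hne : I ≠ 0 := ne_of_gt hIpos
      have h5 : 2*(((μ (A iA)).toReal + 1)/I)*I = 2*((μ (A iA)).toReal + 1) := by
        field_simp
      rw [mul_zero, add_zero, h5] at hk
      linarith
    · have hk := key (I/J)
      have hne : J ≠ 0 := ne_of_gt hJpos
      have h5 : 2*(I/J)*I = 2*(I^2)/J := by ring
      have h6 : (I/J)^2*J = I^2/J := by
        field_simp
      rw [h5, h6] at hk
      have h55 : 2*I^2/J = 2*(I^2/J) := by ring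
      rw [h55] at hk
      have h7 : I^2/J ≤ (μ (A iA)).toReal := by linarith
      calc I^2 = (I^2/J)*J := by field_simp
        _ ≤ 1*J := mul_le_mul_of_nonneg_right (h7.trans haA1) hJpos.le
        _ = J := one_mul J
  have hfin : ((M:ℝ)*ε)^2 ≤ (2*(M:ℝ)+1) + η*(2*(M:ℝ))^2 :=
    calc ((M:ℝ)*ε)^2 ≤ I^2 := pow_le_pow_left₀ (mul_pos hMpos hε).le hIlb 2
      _ ≤ J := hI2J
      _ ≤ _ := hJub
  rw [hηdef] at hfin
  have h7 : ε^2*(M:ℝ)^2 ≤ 6*(M:ℝ) := by nlinarith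
  have h8 : ε^2*(M:ℝ) ≤ 6 := by nlinarith
  have h9 : ε^2*(8/ε^2 + 1) ≤ ε^2*(M:ℝ) := by
    have hMlb : 8/ε^2 + 1 ≤ (M:ℝ) := by
      have hM : (M:ℝ) = (C:ℝ) + 1 := by
        rw [hMdef]
        push_cast
        ring
      linarith [hCR]
    exact mul_le_mul_of_nonneg_left hMlb hε2.le
  have h10 : ε^2*(8/ε^2 + 1) = 8 + ε^2 := by
    field_simp
  linarith
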